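/- Let K be a field and k ∈ K. Define the relation ∼ₖ on Kˣ (the nonzero elements of K) by a ∼ₖ b ⇔ ∃ x, y ∈ K such that x² − k·y² = a·b. Then ∼ₖ is an equivalence relation on Kˣ: it is reflexive, symmetric and transitive. -/

import Mathlib

/-- For a field `K` and `k ∈ K`, the relation
`a ∼ₖ b ↔ ∃ x y, x² - k y² = a b` is an equivalence relation on `Kˣ`. -/
theorem norm_form_equivalence {K : Type*} [Field K] (k : K) :
    Equivalence (fun a b : Kˣ => ∃ x y : K, x ^ 2 - k * y ^ 2 = (a : K) * (b : K)) := by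
  constructor
  · intro a; exact ⟨a, 0, by ring⟩
  · rintro a b ⟨x, y, h⟩; exact ⟨x, y, by rw [h]; ring⟩
  · rintro a b c ⟨x, y, hxy⟩ ⟨u, v, huv⟩
    refine ⟨(x * u + k * y * v) / b, (x * v + y * u) / b, ?_⟩
    have hb : (b : K) ≠ 0 := b.ne_zero
    field_simp
    have : (x ^ 2 - k * y ^ 2) * (u ^ 2 - k * v ^ 2) = ((a : K) * b) * (b * c) := by
      rw [hxy, huv]
    calc (x * u + k * y * v) ^ 2 - k * (x * v + u * y) ^ 2
        = (x ^ 2 - k * y ^ 2) * (u ^ 2 - k * v ^ 2) := by ring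
      _ = (b : K) ^ 2 * a * c := by rw [this]; ring
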